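/- Let jobs a_i and a_j each be assigned to exactly r servers among c servers, with no server assigned both jobs. Then g(0,x) := ∑_{Ŝ, |Ŝ|=x} max(n_{i,Ŝ}−1,0)·max(n_{j,Ŝ}−1,0), summed over all x-element subsets Ŝ of servers, equals r²·C(c−2,x−2) − 2r·C(c−1,x−1) + C(c,x) − 2·C(c−r,x) + 2r·C(c−r−1,x−1) + C(c−2r,x). -/
import Mathlib

open Finset

/-- Binomial coefficient `C(a,b)` on integers, with the convention that it is
zero when `b < 0` or `b > a`. -/
def ch (a b : ℤ) : ℤ := if 0 ≤ b ∧ b ≤ a then ((a.toNat).choose b.toNat : ℤ) else 0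

lemma ch_coe (a b : ℕ) : ch (a : ℤ) (b : ℤ) = (a.choose b : ℤ) := by
  unfold ch
  rcases le_or_gt b a with h | h
  · rw [if_pos ⟨Int.natCast_nonneg b, by exact_mod_cast h⟩, Int.toNat_natCast, Int.toNat_natCast]
  · rw [if_neg (by push_cast; omega), Nat.choose_eq_zero_of_lt h, Nat.cast_zero]

lemma ch_of_neg {a b : ℤ} (h : b < 0) : ch a b = 0 := by
  unfold ch; rw [if_neg (by omega)]

lemma ch_of_lt {a b : ℤ} (h : a < b) : ch a b = 0 := by
  unfold ch; rw [if_neg (by omega)]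

lemma ch_zero_right {a : ℤ} (h : 0 ≤ a) : ch a 0 = 1 := by
  unfold ch; rw [if_pos ⟨le_refl 0, h⟩]; simp

variable {α : Type*} [DecidableEq α]

lemma count_contains (s T : Finset α) (hT : T ⊆ s) (x : ℕ) (hx : T.card ≤ x) :
    ((s.powersetCard x).filter (fun S => T ⊆ S)).card
      = (s.card - T.card).choose (x - T.card) := by
  rw [← card_sdiff_of_subset hT, ← card_powersetCard]
  apply Finset.card_bij (fun S _ => S \ T)
  · intro S hS
    simp only [mem_filter, mem_powersetCard] at hS
    obtain ⟨⟨hSs, hScard⟩, hTS⟩ := hS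
    rw [mem_powersetCard]
    exact ⟨sdiff_subset_sdiff hSs (le_refl T), by rw [card_sdiff_of_subset hTS, hScard]⟩
  · intro S₁ h₁ S₂ h₂ h
    simp only [mem_filter, mem_powersetCard] at h₁ h₂
    rw [← sdiff_union_of_subset h₁.2, ← sdiff_union_of_subset h₂.2, h]
  · intro S' hS'
    rw [mem_powersetCard] at hS'
    obtain ⟨hsub, hcard⟩ := hS'
    have hdisj : Disjoint S' T := disjoint_of_subset_left hsub sdiff_disjoint
    refine ⟨S' ∪ T, ?_, ?_⟩
    · simp only [mem_filter, mem_powersetCard]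
      refine ⟨⟨union_subset (hsub.trans sdiff_subset) hT, ?_⟩, subset_union_right⟩
      rw [card_union_of_disjoint hdisj, hcard]
      omega
    · rw [union_sdiff_right, sdiff_eq_self_of_disjoint hdisj]

lemma card_inter_eq_sum (B S : Finset α) :
    (B ∩ S).card = ∑ q ∈ B, if q ∈ S then 1 else 0 := by
  rw [← Finset.filter_mem_eq_inter, Finset.card_filter]

lemma sum_card_inter (s B : Finset α) (hB : B ⊆ s) (x : ℕ) (hx : 1 ≤ x) :
    ∑ S ∈ s.powersetCard x, (B ∩ S).card = B.card * (s.card - 1).choose (x - 1) := by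
  simp only [card_inter_eq_sum]
  rw [Finset.sum_comm]
  rw [Finset.sum_congr rfl (fun q hq => ?_), Finset.sum_const, smul_eq_mul]
  rw [← Finset.card_filter]
  have : (s.powersetCard x).filter (fun S => q ∈ S)
      = (s.powersetCard x).filter (fun S => {q} ⊆ S) := by
    apply Finset.filter_congr; intro S _; simp
  rw [this, count_contains s {q} (by simpa using hB hq) x (by simpa using hx), card_singleton]

lemma sum_card_inter_mul (s A B : Finset α) (hA : A ⊆ s) (hB : B ⊆ s)
    (hd : Disjoint A B) (x : ℕ) (hx : 2 ≤ x) :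
    ∑ S ∈ s.powersetCard x, (A ∩ S).card * (B ∩ S).card
      = A.card * B.card * (s.card - 2).choose (x - 2) := by
  have step : ∀ S : Finset α, (A ∩ S).card * (B ∩ S).card
      = ∑ pq ∈ A ×ˢ B, if ({pq.1, pq.2} : Finset α) ⊆ S then 1 else 0 := by
    intro S
    rw [← Finset.card_product, ← Finset.card_filter]
    congr 1
    ext pq
    simp only [Finset.mem_product, Finset.mem_inter, Finset.mem_filter,
      Finset.insert_subset_iff, Finset.singleton_subset_iff]
    tauto
  simp only [step]
  rw [Finset.sum_comm]
  have inner : ∀ pq ∈ A ×ˢ B,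
      (∑ S ∈ s.powersetCard x, if ({pq.1, pq.2} : Finset α) ⊆ S then 1 else 0)
        = (s.card - 2).choose (x - 2) := by
    rintro ⟨p, q⟩ hpq
    rw [Finset.mem_product] at hpq
    have hne : p ≠ q := fun h => (Finset.disjoint_left.mp hd hpq.1) (h ▸ hpq.2)
    have hc2 : ({p, q} : Finset α).card = 2 := by
      rw [Finset.card_insert_of_notMem (by simpa using hne), card_singleton]
    rw [← Finset.card_filter,
      count_contains s {p, q} (by simp [Finset.insert_subset_iff, hA hpq.1, hB hpq.2]) x
        (by omega), hc2]
  rw [Finset.sum_congr rfl inner, Finset.sum_const, smul_eq_mul, Finset.card_product]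

lemma filter_inter_empty (s A : Finset α) (x : ℕ) :
    (s.powersetCard x).filter (fun S => A ∩ S = ∅) = (s \ A).powersetCard x := by
  ext S
  simp only [mem_filter, mem_powersetCard, Finset.subset_sdiff,
    ← Finset.disjoint_iff_inter_eq_empty]
  constructor
  · rintro ⟨⟨h1, h2⟩, h3⟩; exact ⟨⟨h1, h3.symm⟩, h2⟩
  · rintro ⟨⟨h1, h3⟩, h2⟩; exact ⟨⟨h1, h2⟩, h3.symm⟩

lemma pw (a b : ℕ) : ((a - 1 : ℕ) : ℤ) * ((b - 1 : ℕ) : ℤ)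
    = ((a : ℤ) * b - a - b + 1) + (if a = 0 then (b : ℤ) - 1 else 0)
      + (if b = 0 then (a : ℤ) - 1 else 0) + (if a = 0 ∧ b = 0 then 1 else 0) := by
  rcases a with _ | a <;> rcases b with _ | b <;> simp <;> push_cast <;> ring

lemma ch_one_right {a : ℤ} (h : 0 ≤ a) : ch a 1 = a := by
  unfold ch
  rcases lt_or_ge a 1 with h1 | h1
  · rw [if_neg (by omega)]; omega
  · rw [if_pos ⟨by norm_num, h1⟩]
    simp [Nat.choose_one_right, Int.toNat_of_nonneg h]

/-- If jobs `a_i`, `a_j` are assigned to disjoint sets `A`, `B` of `r` servers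
each (no server gets both jobs), then
`g(0,x) = ∑_{|Ŝ|=x} max(n_{i,Ŝ}-1,0)·max(n_{j,Ŝ}-1,0)` equals
`r²·C(c-2,x-2) - 2r·C(c-1,x-1) + C(c,x) - 2·C(c-r,x) + 2r·C(c-r-1,x-1) + C(c-2r,x)`. -/
theorem g_zero_closed_form (c r x : ℕ) (A B : Finset (Fin c))
    (hA : A.card = r) (hB : B.card = r) (hAB : Disjoint A B) :
    ∑ S ∈ Finset.powersetCard x (Finset.univ : Finset (Fin c)),
        (((A ∩ S).card - 1 : ℕ) : ℤ) * (((B ∩ S).card - 1 : ℕ) : ℤ)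
      = (r : ℤ) ^ 2 * ch ((c : ℤ) - 2) ((x : ℤ) - 2)
        - 2 * (r : ℤ) * ch ((c : ℤ) - 1) ((x : ℤ) - 1)
        + ch (c : ℤ) (x : ℤ)
        - 2 * ch ((c : ℤ) - r) (x : ℤ)
        + 2 * (r : ℤ) * ch ((c : ℤ) - r - 1) ((x : ℤ) - 1)
        + ch ((c : ℤ) - 2 * r) (x : ℤ) := by
  have hUcard : (Finset.univ : Finset (Fin c)).card = c := by simp
  have h2rc : 2 * r ≤ c := by
    have h1 : (A ∪ B).card = 2 * r := by
      rw [card_union_of_disjoint hAB, hA, hB]; omega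
    have h2 := card_le_card (subset_univ (A ∪ B))
    rw [h1, hUcard] at h2; exact h2
  have hrc : r ≤ c := by omega
  rcases lt_or_ge c x with hcx | hxc
  · -- x > c : both sides are zero
    rw [Finset.powersetCard_eq_empty.mpr (by rw [hUcard]; exact hcx), Finset.sum_empty,
      ch_of_lt (by omega : (c:ℤ) - 2 < (x:ℤ) - 2),
      ch_of_lt (by omega : (c:ℤ) - 1 < (x:ℤ) - 1),
      ch_of_lt (by omega : (c:ℤ) < (x:ℤ)),
      ch_of_lt (by omega : (c:ℤ) - r < (x:ℤ)),
      ch_of_lt (by omega : (c:ℤ) - r - 1 < (x:ℤ) - 1),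
      ch_of_lt (by omega : (c:ℤ) - 2 * r < (x:ℤ))]
    ring
  · rcases Nat.lt_or_ge x 2 with hx2 | hx2
    · interval_cases x
      · -- x = 0
        rw [Finset.powersetCard_zero, Finset.sum_singleton]
        simp only [Nat.cast_zero, Nat.cast_one]
        rw [ch_of_neg (by omega : (0:ℤ) - 2 < 0),
          ch_of_neg (by omega : (0:ℤ) - 1 < 0),
          ch_zero_right (by omega : (0:ℤ) ≤ (c:ℤ)),
          ch_zero_right (by omega : (0:ℤ) ≤ (c:ℤ) - r),
          ch_of_neg (by omega : (0:ℤ) - 1 < 0),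
          ch_zero_right (by omega : (0:ℤ) ≤ (c:ℤ) - 2 * r)]
        simp
      · -- x = 1
        rw [Finset.sum_eq_zero (fun S hS => ?_)]
        simp only [Nat.cast_zero, Nat.cast_one]
        rw [ch_of_neg (by omega : (1:ℤ) - 2 < 0),
          show (1:ℤ) - 1 = 0 by omega,
          ch_zero_right (by omega : (0:ℤ) ≤ (c:ℤ) - 1),
          ch_one_right (by omega : (0:ℤ) ≤ (c:ℤ)),
          ch_one_right (by omega : (0:ℤ) ≤ (c:ℤ) - r),
          ch_zero_right (by omega : (0:ℤ) ≤ (c:ℤ) - r - 1),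
          ch_one_right (by omega : (0:ℤ) ≤ (c:ℤ) - 2 * r)]
        · ring
        · rw [Finset.mem_powersetCard] at hS
          have h1 : (A ∩ S).card ≤ 1 := by
            have := Finset.card_le_card (Finset.inter_subset_right (s₁ := A) (s₂ := S))
            omega
          have h2 : (A ∩ S).card - 1 = 0 := by omega
          rw [h2]
          simp
    · -- main case : 2 ≤ x ≤ c
      have hx1 : 1 ≤ x := by omega
      have hBA : Disjoint B A := hAB.symm
      have hBsub : B ⊆ Finset.univ \ A := by
        rw [Finset.subset_sdiff]; exact ⟨subset_univ B, hBA⟩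
      have hAsub : A ⊆ Finset.univ \ B := by
        rw [Finset.subset_sdiff]; exact ⟨subset_univ A, hAB⟩
      have hcardUA : ((Finset.univ : Finset (Fin c)) \ A).card = c - r := by
        rw [card_sdiff_of_subset (subset_univ A), hUcard, hA]
      have hcardUB : ((Finset.univ : Finset (Fin c)) \ B).card = c - r := by
        rw [card_sdiff_of_subset (subset_univ B), hUcard, hB]
      -- ch values
      have E1 : ch ((c:ℤ) - 2) ((x:ℤ) - 2) = ((c-2).choose (x-2) : ℤ) := by
        rw [show (c:ℤ) - 2 = ((c-2:ℕ):ℤ) from by omega,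
          show (x:ℤ) - 2 = ((x-2:ℕ):ℤ) from by omega, ch_coe]
      have E2 : ch ((c:ℤ) - 1) ((x:ℤ) - 1) = ((c-1).choose (x-1) : ℤ) := by
        rw [show (c:ℤ) - 1 = ((c-1:ℕ):ℤ) from by omega,
          show (x:ℤ) - 1 = ((x-1:ℕ):ℤ) from by omega, ch_coe]
      have E3 : ch (c:ℤ) (x:ℤ) = (c.choose x : ℤ) := ch_coe c x
      have E4 : ch ((c:ℤ) - r) (x:ℤ) = ((c-r).choose x : ℤ) := by
        rw [show (c:ℤ) - r = ((c-r:ℕ):ℤ) from by omega, ch_coe]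
      have E5 : ch ((c:ℤ) - r - 1) ((x:ℤ) - 1) = ((c-r-1).choose (x-1) : ℤ) := by
        rw [show (c:ℤ) - r - 1 = ((c-r-1:ℕ):ℤ) from by omega,
          show (x:ℤ) - 1 = ((x-1:ℕ):ℤ) from by omega, ch_coe]
      have E6 : ch ((c:ℤ) - 2 * r) (x:ℤ) = ((c-2*r).choose x : ℤ) := by
        rw [show (c:ℤ) - 2 * r = ((c-2*r:ℕ):ℤ) from by omega, ch_coe]
      rw [E1, E2, E3, E4, E5, E6]
      -- pointwise expansion
      rw [Finset.sum_congr rfl (fun S _ => pw (A ∩ S).card (B ∩ S).card)]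
      simp only [Finset.sum_add_distrib, Finset.sum_sub_distrib]
      -- the seven sums
      have hT1 : ∑ S ∈ Finset.powersetCard x (Finset.univ : Finset (Fin c)),
          ((A ∩ S).card : ℤ) * ((B ∩ S).card : ℤ)
            = (r : ℤ) * r * ((c-2).choose (x-2) : ℤ) := by
        have h := sum_card_inter_mul (Finset.univ : Finset (Fin c)) A B
          (subset_univ A) (subset_univ B) hAB x hx2
        rw [hA, hB, hUcard] at h
        exact_mod_cast h
      have hT2 : ∑ S ∈ Finset.powersetCard x (Finset.univ : Finset (Fin c)),
          ((A ∩ S).card : ℤ) = (r : ℤ) * ((c-1).choose (x-1) : ℤ) := by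
        have h := sum_card_inter (Finset.univ : Finset (Fin c)) A (subset_univ A) x hx1
        rw [hA, hUcard] at h
        exact_mod_cast h
      have hT3 : ∑ S ∈ Finset.powersetCard x (Finset.univ : Finset (Fin c)),
          ((B ∩ S).card : ℤ) = (r : ℤ) * ((c-1).choose (x-1) : ℤ) := by
        have h := sum_card_inter (Finset.univ : Finset (Fin c)) B (subset_univ B) x hx1
        rw [hB, hUcard] at h
        exact_mod_cast h
      have hT4 : ∑ _S ∈ Finset.powersetCard x (Finset.univ : Finset (Fin c)),
          (1 : ℤ) = (c.choose x : ℤ) := by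
        rw [Finset.sum_const, Finset.card_powersetCard, hUcard, nsmul_eq_mul, mul_one]
      have hT5 : ∑ S ∈ Finset.powersetCard x (Finset.univ : Finset (Fin c)),
          (if (A ∩ S).card = 0 then ((B ∩ S).card : ℤ) - 1 else 0)
            = (r : ℤ) * ((c-r-1).choose (x-1) : ℤ) - ((c-r).choose x : ℤ) := by
        rw [← Finset.sum_filter]
        rw [Finset.filter_congr (fun S _ => by rw [Finset.card_eq_zero])]
        rw [filter_inter_empty]
        rw [Finset.sum_sub_distrib, Finset.sum_const, nsmul_eq_mul, mul_one,
          Finset.card_powersetCard, hcardUA]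
        have h := sum_card_inter ((Finset.univ : Finset (Fin c)) \ A) B hBsub x hx1
        rw [hB, hcardUA] at h
        have h' : ∑ S ∈ ((Finset.univ : Finset (Fin c)) \ A).powersetCard x,
            ((B ∩ S).card : ℤ) = (r : ℤ) * ((c-r-1).choose (x-1) : ℤ) := by
          exact_mod_cast h
        rw [h']
      have hT6 : ∑ S ∈ Finset.powersetCard x (Finset.univ : Finset (Fin c)),
          (if (B ∩ S).card = 0 then ((A ∩ S).card : ℤ) - 1 else 0)
            = (r : ℤ) * ((c-r-1).choose (x-1) : ℤ) - ((c-r).choose x : ℤ) := by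
        rw [← Finset.sum_filter]
        rw [Finset.filter_congr (fun S _ => by rw [Finset.card_eq_zero])]
        rw [filter_inter_empty]
        rw [Finset.sum_sub_distrib, Finset.sum_const, nsmul_eq_mul, mul_one,
          Finset.card_powersetCard, hcardUB]
        have h := sum_card_inter ((Finset.univ : Finset (Fin c)) \ B) A hAsub x hx1
        rw [hA, hcardUB] at h
        have h' : ∑ S ∈ ((Finset.univ : Finset (Fin c)) \ B).powersetCard x,
            ((A ∩ S).card : ℤ) = (r : ℤ) * ((c-r-1).choose (x-1) : ℤ) := by
          exact_mod_cast h
        rw [h']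
      have hT7 : ∑ S ∈ Finset.powersetCard x (Finset.univ : Finset (Fin c)),
          (if (A ∩ S).card = 0 ∧ (B ∩ S).card = 0 then (1 : ℤ) else 0)
            = ((c-2*r).choose x : ℤ) := by
        rw [← Finset.sum_filter]
        rw [Finset.filter_congr (fun S _ => by
          rw [Finset.card_eq_zero, Finset.card_eq_zero, ← Finset.union_eq_empty,
            ← Finset.union_inter_distrib_right])]
        rw [filter_inter_empty, Finset.sum_const, nsmul_eq_mul, mul_one,
          Finset.card_powersetCard, card_sdiff_of_subset (subset_univ (A ∪ B)),
          card_union_of_disjoint hAB, hA, hB, hUcard,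
          show c - (r + r) = c - 2*r from by omega]
      rw [hT1, hT2, hT3, hT4, hT5, hT6, hT7]
      ring
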